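/- arXiv:1702.04320 — 2 statements merged into one kernel-verified Lean document; each statement's English description precedes it below -/
import Mathlib

section
/- Weak duality for the finite-dimensional linear-quadratic problem: if Q, R, π are symmetric positive semidefinite (with Q, R positive definite where inverses are used), then for any feasible primal pair (z, u) satisfying ż = Az + bu with z(0) = z₀, and any feasible dual pair (γ, ρ) satisfying γ̇ = −Aᵀγ + ρ on [0,1], the dual objective J_D(ρ, γ) = (1/2)∫₀¹(−ρᵀQ⁻¹ρ − γᵀbR⁻¹bᵀγ)dt − γ(0)ᵀz₀ − (1/2)γ(1)ᵀπ⁻¹γ(1) is at most the primal objective J_P(z, u) = (1/2)∫₀¹(zᵀQz + uᵀRu)dt + (1/2)z(1)ᵀπ z(1). -/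
open Matrix

lemma cont_dot {m : ℕ} {v w : ℝ → Fin m → ℝ} (hv : Continuous v) (hw : Continuous w) :
    Continuous fun t => v t ⬝ᵥ w t := by
  simp only [dotProduct]
  exact continuous_finset_sum _ fun i _ =>
    ((continuous_apply i).comp hv).mul ((continuous_apply i).comp hw)

lemma cont_mulVec {m l : ℕ} {M : ℝ → Matrix (Fin m) (Fin l) ℝ} {w : ℝ → Fin l → ℝ}
    (hM : Continuous M) (hw : Continuous w) : Continuous fun t => M t *ᵥ w t := by
  apply continuous_pi; intro i
  simp only [mulVec, dotProduct]
  exact continuous_finset_sum _ fun j _ =>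
    (((continuous_apply j).comp ((continuous_apply i).comp hM))).mul ((continuous_apply j).comp hw)

lemma cont_inv {m : ℕ} {M : ℝ → Matrix (Fin m) (Fin m) ℝ} (hM : Continuous M)
    (hdet : ∀ t, (M t).det ≠ 0) : Continuous fun t => (M t)⁻¹ := by
  simp only [Matrix.inv_def, Ring.inverse_eq_inv']
  exact (hM.matrix_det.inv₀ hdet).smul hM.matrix_adjugate

lemma hasDerivAt_dot {m : ℕ} {v w : ℝ → Fin m → ℝ} {v' w' : Fin m → ℝ} {t : ℝ}
    (hv : HasDerivAt v v' t) (hw : HasDerivAt w w' t) :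
    HasDerivAt (fun t => v t ⬝ᵥ w t) (v' ⬝ᵥ w t + v t ⬝ᵥ w') t := by
  simp only [dotProduct]
  rw [← Finset.sum_add_distrib]
  exact HasDerivAt.fun_sum fun i _ =>
    ((hasDerivAt_pi.mp hv i).mul (hasDerivAt_pi.mp hw i))

lemma quad_key {m : ℕ} (M : Matrix (Fin m) (Fin m) ℝ) (hM : M.PosDef)
    (v w : Fin m → ℝ) : 2 * (w ⬝ᵥ v) ≤ v ⬝ᵥ (M *ᵥ v) + w ⬝ᵥ (M⁻¹ *ᵥ w) := by
  have hMsymm : Mᵀ = M := hM.isHermitian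
  have hinv : M * M⁻¹ = 1 := M.mul_nonsing_inv (isUnit_iff_ne_zero.mpr hM.det_pos.ne')
  have hMiw : M *ᵥ (M⁻¹ *ᵥ w) = w := by
    rw [mulVec_mulVec, hinv, one_mulVec]
  have h0 : 0 ≤ (v - M⁻¹ *ᵥ w) ⬝ᵥ (M *ᵥ (v - M⁻¹ *ᵥ w)) := by
    have := hM.posSemidef.dotProduct_mulVec_nonneg (v - M⁻¹ *ᵥ w)
    simpa using this
  have hexp : (v - M⁻¹ *ᵥ w) ⬝ᵥ (M *ᵥ (v - M⁻¹ *ᵥ w))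
      = v ⬝ᵥ (M *ᵥ v) - 2 * (w ⬝ᵥ v) + w ⬝ᵥ (M⁻¹ *ᵥ w) := by
    have h1 : (M⁻¹ *ᵥ w) ⬝ᵥ (M *ᵥ v) = w ⬝ᵥ v := by
      rw [dotProduct_mulVec, ← mulVec_transpose, hMsymm, hMiw]
    rw [mulVec_sub, dotProduct_sub, sub_dotProduct, sub_dotProduct, hMiw, h1,
      dotProduct_comm v w, dotProduct_comm (M⁻¹ *ᵥ w) w]
    ring
  linarith [h0, hexp.le, hexp.ge]

/-- Weak duality for the finite-dimensional linear-quadratic problem. -/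
theorem stmt_3 {n k : ℕ}
    (A : ℝ → Matrix (Fin n) (Fin n) ℝ) (b : ℝ → Matrix (Fin n) (Fin k) ℝ)
    (Q : ℝ → Matrix (Fin n) (Fin n) ℝ) (R : ℝ → Matrix (Fin k) (Fin k) ℝ)
    (π : Matrix (Fin n) (Fin n) ℝ)
    (hA : Continuous A) (hb : Continuous b) (hQ : Continuous Q) (hR : Continuous R)
    (hQpd : ∀ t, (Q t).PosDef) (hRpd : ∀ t, (R t).PosDef) (hπ : π.PosDef)
    (z γ ρ : ℝ → Fin n → ℝ) (u : ℝ → Fin k → ℝ)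
    (hu : Continuous u) (hρ : Continuous ρ) (hzc : Continuous z) (hγc : Continuous γ)
    (z₀ : Fin n → ℝ) (hz0 : z 0 = z₀)
    (hzode : ∀ t ∈ Set.Icc (0:ℝ) 1, HasDerivAt z (A t *ᵥ z t + b t *ᵥ u t) t)
    (hγode : ∀ t ∈ Set.Icc (0:ℝ) 1, HasDerivAt γ (-((A t)ᵀ *ᵥ γ t) + ρ t) t) :
    (1/2) * (∫ t in (0:ℝ)..1,
        (-(ρ t ⬝ᵥ ((Q t)⁻¹ *ᵥ ρ t)) - γ t ⬝ᵥ ((b t * (R t)⁻¹ * (b t)ᵀ) *ᵥ γ t)))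
      - γ 0 ⬝ᵥ z₀ - (1/2) * (γ 1 ⬝ᵥ (π⁻¹ *ᵥ γ 1))
    ≤ (1/2) * (∫ t in (0:ℝ)..1, (z t ⬝ᵥ (Q t *ᵥ z t) + u t ⬝ᵥ (R t *ᵥ u t)))
      + (1/2) * (z 1 ⬝ᵥ (π *ᵥ z 1)) := by
  set g : ℝ → ℝ := fun t => ρ t ⬝ᵥ z t + γ t ⬝ᵥ (b t *ᵥ u t) with hg
  set G : ℝ → ℝ := fun t =>
    -(ρ t ⬝ᵥ ((Q t)⁻¹ *ᵥ ρ t)) - γ t ⬝ᵥ ((b t * (R t)⁻¹ * (b t)ᵀ) *ᵥ γ t) with hG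
  set F : ℝ → ℝ := fun t => z t ⬝ᵥ (Q t *ᵥ z t) + u t ⬝ᵥ (R t *ᵥ u t) with hF
  have contQinv : Continuous fun t => (Q t)⁻¹ := cont_inv hQ fun t => (hQpd t).det_pos.ne'
  have contRinv : Continuous fun t => (R t)⁻¹ := cont_inv hR fun t => (hRpd t).det_pos.ne'
  have contM : Continuous fun t => b t * (R t)⁻¹ * (b t)ᵀ :=
    (hb.matrix_mul contRinv).matrix_mul hb.matrix_transpose
  have contg : Continuous g := (cont_dot hρ hzc).add (cont_dot hγc (cont_mulVec hb hu))
  have contG : Continuous G :=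
    ((cont_dot hρ (cont_mulVec contQinv hρ)).neg).sub (cont_dot hγc (cont_mulVec contM hγc))
  have contF : Continuous F :=
    (cont_dot hzc (cont_mulVec hQ hzc)).add (cont_dot hu (cont_mulVec hR hu))
  -- FTC
  have hftc : ∫ t in (0:ℝ)..1, g t = γ 1 ⬝ᵥ z 1 - γ 0 ⬝ᵥ z 0 := by
    apply intervalIntegral.integral_eq_sub_of_hasDerivAt (f := fun t => γ t ⬝ᵥ z t)
    · intro t ht
      rw [Set.uIcc_of_le zero_le_one] at ht
      have h := hasDerivAt_dot (hγode t ht) (hzode t ht)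
      refine HasDerivAt.congr_deriv h ?_
      have hAz : ((A t)ᵀ *ᵥ γ t) ⬝ᵥ z t = γ t ⬝ᵥ (A t *ᵥ z t) := by
        rw [mulVec_transpose, ← dotProduct_mulVec]
      simp only [hg, add_dotProduct, neg_dotProduct, dotProduct_add, hAz]
      ring
    · exact contg.intervalIntegrable 0 1
  -- pointwise inequality
  have hpt : ∀ t ∈ Set.Icc (0:ℝ) 1, G t + 2 * g t ≤ F t := by
    intro t _
    have k1 := quad_key (Q t) (hQpd t) (z t) (ρ t)
    have k2 := quad_key (R t) (hRpd t) (u t) ((b t)ᵀ *ᵥ γ t)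
    have e1 : γ t ⬝ᵥ (b t *ᵥ u t) = ((b t)ᵀ *ᵥ γ t) ⬝ᵥ u t := by
      rw [mulVec_transpose, ← dotProduct_mulVec]
    have e2 : γ t ⬝ᵥ ((b t * (R t)⁻¹ * (b t)ᵀ) *ᵥ γ t)
        = ((b t)ᵀ *ᵥ γ t) ⬝ᵥ ((R t)⁻¹ *ᵥ ((b t)ᵀ *ᵥ γ t)) := by
      rw [← mulVec_mulVec, ← mulVec_mulVec, mulVec_transpose, ← dotProduct_mulVec]
    simp only [hG, hF, hg, e1, e2]
    linarith
  have hint1 : IntervalIntegrable (fun t => G t + 2 * g t) MeasureTheory.volume 0 1 :=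
    (contG.add (continuous_const.mul contg)).intervalIntegrable 0 1
  have hint2 : IntervalIntegrable F MeasureTheory.volume 0 1 := contF.intervalIntegrable 0 1
  have hmono : (∫ t in (0:ℝ)..1, (G t + 2 * g t)) ≤ ∫ t in (0:ℝ)..1, F t :=
    intervalIntegral.integral_mono_on zero_le_one hint1 hint2 hpt
  have hsplit : (∫ t in (0:ℝ)..1, (G t + 2 * g t))
      = (∫ t in (0:ℝ)..1, G t) + 2 * ∫ t in (0:ℝ)..1, g t := by
    rw [intervalIntegral.integral_add (g := fun t => 2 * g t) (contG.intervalIntegrable 0 1)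
      ((continuous_const.mul contg).intervalIntegrable 0 1), intervalIntegral.integral_const_mul]
  have hend := quad_key π hπ (z 1) (-(γ 1))
  simp only [neg_dotProduct, mulVec_neg, dotProduct_neg, neg_neg] at hend
  rw [← hz0]
  rw [hsplit, hftc] at hmono
  linarith
end

section
/- Strong duality via the co-state: suppose (z, u, χ) satisfy the optimality system ż = Az − bR⁻¹bᵀχ, χ̇ = −Aᵀχ − Qz on [0,1] with z(0) = z₀ and χ(1) = π z(1), where u = −R⁻¹bᵀχ, and define γ = −χ, ρ = Qz. Then γ̇ = −Aᵀγ + ρ and the dual objective J_D(ρ, γ) = (1/2)∫₀¹(−ρᵀQ⁻¹ρ − γᵀbR⁻¹bᵀγ)dt − γ(0)ᵀz₀ − (1/2)γ(1)ᵀπ⁻¹γ(1) equals the primal objective J_P(z, u) = (1/2)∫₀¹(zᵀQz + uᵀRu)dt + (1/2)z(1)ᵀπ z(1). -/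
open Matrix

lemma dot_deriv {n : ℕ} {z χ : ℝ → Fin n → ℝ} {z' χ' : Fin n → ℝ} {t : ℝ}
    (hz : HasDerivAt z z' t) (hχ : HasDerivAt χ χ' t) :
    HasDerivAt (fun s => χ s ⬝ᵥ z s) (χ' ⬝ᵥ z t + χ t ⬝ᵥ z') t := by
  have hz' := hasDerivAt_pi.1 hz
  have hχ' := hasDerivAt_pi.1 hχ
  have : HasDerivAt (fun s => ∑ i, χ s i * z s i)
      (∑ i, (χ' i * z t i + χ t i * z' i)) t :=
    HasDerivAt.fun_sum fun i _ => (hχ' i).mul (hz' i)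
  simpa [dotProduct, Finset.sum_add_distrib] using this

lemma transp_dot {n m : ℕ} (A : Matrix (Fin n) (Fin m) ℝ) (x : Fin n → ℝ) (y : Fin m → ℝ) :
    (Aᵀ *ᵥ x) ⬝ᵥ y = x ⬝ᵥ (A *ᵥ y) := by
  rw [Matrix.mulVec_transpose, ← Matrix.dotProduct_mulVec]

/-- Strong duality via the co-state: `γ = −χ`, `ρ = Qz` is dual feasible and the dual
objective equals the primal objective. -/
theorem stmt_6 {n k : ℕ}
    (A : ℝ → Matrix (Fin n) (Fin n) ℝ) (b : ℝ → Matrix (Fin n) (Fin k) ℝ)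
    (Q : ℝ → Matrix (Fin n) (Fin n) ℝ) (R : ℝ → Matrix (Fin k) (Fin k) ℝ)
    (π : Matrix (Fin n) (Fin n) ℝ)
    (hA : Continuous A) (hb : Continuous b) (hQ : Continuous Q) (hR : Continuous R)
    (hQpd : ∀ t, (Q t).PosDef) (hRpd : ∀ t, (R t).PosDef) (hπ : π.PosDef)
    (z χ : ℝ → Fin n → ℝ) (u : ℝ → Fin k → ℝ)
    (hzc : Continuous z) (hχc : Continuous χ)
    (z₀ : Fin n → ℝ) (hz0 : z 0 = z₀) (hχ1 : χ 1 = π *ᵥ z 1)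
    (hudef : ∀ t, u t = -((R t)⁻¹ *ᵥ ((b t)ᵀ *ᵥ χ t)))
    (hzode : ∀ t ∈ Set.Icc (0:ℝ) 1,
      HasDerivAt z (A t *ᵥ z t - (b t * (R t)⁻¹ * (b t)ᵀ) *ᵥ χ t) t)
    (hχode : ∀ t ∈ Set.Icc (0:ℝ) 1,
      HasDerivAt χ (-((A t)ᵀ *ᵥ χ t) - Q t *ᵥ z t) t) :
    (∀ t ∈ Set.Icc (0:ℝ) 1,
      HasDerivAt (fun s => -χ s) (-((A t)ᵀ *ᵥ (-χ t)) + Q t *ᵥ z t) t) ∧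
    (1/2) * (∫ t in (0:ℝ)..1,
        (-((Q t *ᵥ z t) ⬝ᵥ ((Q t)⁻¹ *ᵥ (Q t *ᵥ z t)))
          - (-χ t) ⬝ᵥ ((b t * (R t)⁻¹ * (b t)ᵀ) *ᵥ (-χ t))))
      - (-χ 0) ⬝ᵥ z₀ - (1/2) * ((-χ 1) ⬝ᵥ (π⁻¹ *ᵥ (-χ 1)))
    = (1/2) * (∫ t in (0:ℝ)..1, (z t ⬝ᵥ (Q t *ᵥ z t) + u t ⬝ᵥ (R t *ᵥ u t)))
      + (1/2) * (z 1 ⬝ᵥ (π *ᵥ z 1)) := by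
  have hRinv : ∀ t, R t * (R t)⁻¹ = 1 := fun t =>
    Matrix.mul_nonsing_inv _ (isUnit_iff_ne_zero.2 (hRpd t).det_pos.ne')
  have hQinv : ∀ t, (Q t)⁻¹ * Q t = 1 := fun t =>
    Matrix.nonsing_inv_mul _ (isUnit_iff_ne_zero.2 (hQpd t).det_pos.ne')
  have hRinvC : Continuous fun t => (R t)⁻¹ := by
    have : (fun t => (R t)⁻¹) = fun t => ((R t).det)⁻¹ • (R t).adjugate := by
      funext t
      rw [Matrix.inv_def, Ring.inverse_eq_inv]
    rw [this]
    exact (hR.matrix_det.inv₀ fun t => (hRpd t).det_pos.ne').smul hR.matrix_adjugate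
  have hBC : Continuous fun t => b t * (R t)⁻¹ * (b t)ᵀ :=
    (hb.matrix_mul hRinvC).matrix_mul hb.matrix_transpose
  have key : ∀ t ∈ Set.Icc (0:ℝ) 1,
      HasDerivAt (fun s => χ s ⬝ᵥ z s)
        (-(z t ⬝ᵥ (Q t *ᵥ z t)) - χ t ⬝ᵥ ((b t * (R t)⁻¹ * (b t)ᵀ) *ᵥ χ t)) t := by
    intro t ht
    have h := dot_deriv (hzode t ht) (hχode t ht)
    convert h using 1
    rw [sub_dotProduct, neg_dotProduct, dotProduct_sub,
      transp_dot, dotProduct_comm (Q t *ᵥ z t) (z t)]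
    ring
  have hcont : Continuous fun t =>
      -(z t ⬝ᵥ (Q t *ᵥ z t)) - χ t ⬝ᵥ ((b t * (R t)⁻¹ * (b t)ᵀ) *ᵥ χ t) :=
    ((hzc.dotProduct (hQ.matrix_mulVec hzc)).neg).sub
      (hχc.dotProduct (hBC.matrix_mulVec hχc))
  have hint : (∫ t in (0:ℝ)..1,
      (-(z t ⬝ᵥ (Q t *ᵥ z t)) - χ t ⬝ᵥ ((b t * (R t)⁻¹ * (b t)ᵀ) *ᵥ χ t)))
      = χ 1 ⬝ᵥ z 1 - χ 0 ⬝ᵥ z 0 := by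
    apply intervalIntegral.integral_eq_sub_of_hasDerivAt (f := fun s => χ s ⬝ᵥ z s)
    · intro t ht
      exact key t (by simpa [Set.uIcc_of_le (by norm_num : (0:ℝ) ≤ 1)] using ht)
    · exact hcont.intervalIntegrable 0 1
  constructor
  · intro t ht
    have h := (hχode t ht).fun_neg
    refine h.congr_deriv ?_
    rw [Matrix.mulVec_neg, neg_neg, neg_sub]
    abel
  have hL : ∀ t, (-((Q t *ᵥ z t) ⬝ᵥ ((Q t)⁻¹ *ᵥ (Q t *ᵥ z t)))
      - (-χ t) ⬝ᵥ ((b t * (R t)⁻¹ * (b t)ᵀ) *ᵥ (-χ t)))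
      = -(z t ⬝ᵥ (Q t *ᵥ z t)) - χ t ⬝ᵥ ((b t * (R t)⁻¹ * (b t)ᵀ) *ᵥ χ t) := by
    intro t
    have h1 : (Q t)⁻¹ *ᵥ (Q t *ᵥ z t) = z t := by
      rw [Matrix.mulVec_mulVec, hQinv, Matrix.one_mulVec]
    rw [h1, Matrix.mulVec_neg, neg_dotProduct, dotProduct_neg, neg_neg,
      dotProduct_comm (Q t *ᵥ z t) (z t)]
  have hRi : ∀ t, z t ⬝ᵥ (Q t *ᵥ z t) + u t ⬝ᵥ (R t *ᵥ u t)
      = -(-(z t ⬝ᵥ (Q t *ᵥ z t)) - χ t ⬝ᵥ ((b t * (R t)⁻¹ * (b t)ᵀ) *ᵥ χ t)) := by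
    intro t
    have hu : u t ⬝ᵥ (R t *ᵥ u t) = χ t ⬝ᵥ ((b t * (R t)⁻¹ * (b t)ᵀ) *ᵥ χ t) := by
      have hRu : R t *ᵥ ((R t)⁻¹ *ᵥ ((b t)ᵀ *ᵥ χ t)) = (b t)ᵀ *ᵥ χ t := by
        rw [Matrix.mulVec_mulVec, hRinv, Matrix.one_mulVec]
      have hBχ : (b t * (R t)⁻¹ * (b t)ᵀ) *ᵥ χ t
          = b t *ᵥ ((R t)⁻¹ *ᵥ ((b t)ᵀ *ᵥ χ t)) := by
        simp [Matrix.mulVec_mulVec, Matrix.mul_assoc]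
      rw [hudef t, Matrix.mulVec_neg, neg_dotProduct, dotProduct_neg, neg_neg,
        hRu, hBχ, ← transp_dot (b t) (χ t), dotProduct_comm]
    rw [hu]; ring
  rw [show (fun t => -((Q t *ᵥ z t) ⬝ᵥ ((Q t)⁻¹ *ᵥ (Q t *ᵥ z t)))
      - (-χ t) ⬝ᵥ ((b t * (R t)⁻¹ * (b t)ᵀ) *ᵥ (-χ t))) = fun t =>
      -(z t ⬝ᵥ (Q t *ᵥ z t)) - χ t ⬝ᵥ ((b t * (R t)⁻¹ * (b t)ᵀ) *ᵥ χ t) from funext hL]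
  rw [show (fun t => z t ⬝ᵥ (Q t *ᵥ z t) + u t ⬝ᵥ (R t *ᵥ u t)) = fun t =>
      -(-(z t ⬝ᵥ (Q t *ᵥ z t)) - χ t ⬝ᵥ ((b t * (R t)⁻¹ * (b t)ᵀ) *ᵥ χ t)) from funext hRi]
  rw [intervalIntegral.integral_neg, hint]
  have hsym : πᵀ = π := by simpa [Matrix.IsSymm] using hπ.1
  have hπz : π⁻¹ *ᵥ χ 1 = z 1 := by
    rw [hχ1, Matrix.mulVec_mulVec, Matrix.nonsing_inv_mul _
      (isUnit_iff_ne_zero.2 hπ.det_pos.ne'), Matrix.one_mulVec]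
  have h1 : (-χ 1) ⬝ᵥ (π⁻¹ *ᵥ (-χ 1)) = χ 1 ⬝ᵥ z 1 := by
    rw [Matrix.mulVec_neg, neg_dotProduct, dotProduct_neg, neg_neg, hπz]
  have h2 : z 1 ⬝ᵥ (π *ᵥ z 1) = χ 1 ⬝ᵥ z 1 := by
    rw [hχ1, dotProduct_comm]
  have h0 : (-χ 0) ⬝ᵥ z₀ = -(χ 0 ⬝ᵥ z 0) := by
    rw [← hz0, neg_dotProduct]
  rw [h1, h2, h0]
  ring
end
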